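/- Let n ≥ 1, h > 0, let R be a symmetric invertible n×n real matrix, let T̂ > 0, and let I denote the n×n identity matrix. Suppose Y : [0, T̂) → (n×n real matrices) is differentiable and for every t ∈ [0, T̂): Y(t) is symmetric positive definite, Y(t)·R = R·Y(t), and Y(t)² = e^{−2t}·(h²·I + R²) − R². Then Y(0) = h·I and, for every t ∈ [0, T̂), Y′(t) = −Y(t) − R·Y(t)⁻¹·R. -/

import Mathlib

open Matrix

attribute [local instance] Matrix.normedAddCommGroup Matrix.normedSpace

/-- If `X` commutes with the square of a positive definite real matrix `A`,
then `X` commutes with `A`. -/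
lemma commute_of_commute_sq {n : ℕ} {A X : Matrix (Fin n) (Fin n) ℝ}
    (hA : A.PosDef) (hcomm : X * A ^ 2 = A ^ 2 * X) : X * A = A * X := by
  have hH := hA.1
  set V : Matrix (Fin n) (Fin n) ℝ := (hH.eigenvectorUnitary : Matrix (Fin n) (Fin n) ℝ) with hV
  set d : Fin n → ℝ := hH.eigenvalues with hd
  have hdpos : ∀ i, 0 < d i := hA.eigenvalues_pos
  have hspec : A = V * diagonal d * star V := by
    have := hH.spectral_theorem
    simpa [hV, hd, Function.comp] using this
  have hVU : V * star V = 1 := (Matrix.mem_unitaryGroup_iff).mp hH.eigenvectorUnitary.2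
  have hUV : star V * V = 1 := (Matrix.mem_unitaryGroup_iff').mp hH.eigenvectorUnitary.2
  set Z : Matrix (Fin n) (Fin n) ℝ := star V * X * V with hZ
  have hXZ : X = V * Z * star V := by
    rw [hZ]
    symm
    calc V * (star V * X * V) * star V = (V * star V) * X * (V * star V) := by
          noncomm_ring
      _ = X := by rw [hVU]; simp
  have hA2 : A ^ 2 = V * diagonal (fun i => d i * d i) * star V := by
    rw [pow_two, hspec]
    calc V * diagonal d * star V * (V * diagonal d * star V)
        = V * (diagonal d * (star V * V) * diagonal d) * star V := by noncomm_ring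
      _ = V * diagonal (fun i => d i * d i) * star V := by
          rw [hUV, mul_one, diagonal_mul_diagonal]
  have hZcomm : Z * diagonal (fun i => d i * d i) = diagonal (fun i => d i * d i) * Z := by
    have := hcomm
    rw [hA2, hXZ] at this
    have h2 : star V * (V * Z * star V * (V * diagonal (fun i => d i * d i) * star V)) * V
        = star V * (V * diagonal (fun i => d i * d i) * star V * (V * Z * star V)) * V := by
      rw [this]
    calc Z * diagonal (fun i => d i * d i)
        = (star V * V) * Z * (star V * V) * diagonal (fun i => d i * d i) * (star V * V) := by
          rw [hUV]; simp
      _ = star V * (V * Z * star V * (V * diagonal (fun i => d i * d i) * star V)) * V := by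
          noncomm_ring
      _ = star V * (V * diagonal (fun i => d i * d i) * star V * (V * Z * star V)) * V := h2
      _ = (star V * V) * diagonal (fun i => d i * d i) * (star V * V) * Z * (star V * V) := by
          noncomm_ring
      _ = diagonal (fun i => d i * d i) * Z := by rw [hUV]; simp
  have hZd : Z * diagonal d = diagonal d * Z := by
    ext i j
    rw [mul_diagonal, diagonal_mul]
    have hij : Z i j * (d j * d j) = (d i * d i) * Z i j := by
      have := congrFun (congrFun hZcomm i) j
      rwa [mul_diagonal, diagonal_mul] at this
    rcases eq_or_ne (d i) (d j) with he | he
    · rw [he]; ring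
    · have : Z i j = 0 := by
        have hne : d j * d j ≠ d i * d i := by
          rcases he.lt_or_gt with h1 | h1 <;> nlinarith [hdpos i, hdpos j]
        have : Z i j * (d j * d j - d i * d i) = 0 := by linarith [hij]
        rcases mul_eq_zero.mp this with h0 | h0
        · exact h0
        · exact absurd (by linarith : d j * d j = d i * d i) hne
      rw [this]; ring
  calc X * A = V * Z * star V * (V * diagonal d * star V) := by rw [← hXZ, ← hspec]
    _ = V * (Z * (star V * V) * diagonal d) * star V := by noncomm_ring
    _ = V * (Z * diagonal d) * star V := by rw [hUV]; simp [mul_assoc]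
    _ = V * (diagonal d * Z) * star V := by rw [hZd]
    _ = V * (diagonal d * (star V * V) * Z) * star V := by rw [hUV]; simp [mul_assoc]
    _ = (V * diagonal d * star V) * (V * Z * star V) := by noncomm_ring
    _ = A * X := by rw [← hXZ, ← hspec]

/-- Example 2 of the paper: the positive definite symmetric matrix function `Y` with
`Y(t)² = e^{−2t}(h²I + R²) − R²` and `Y(t)R = RY(t)` satisfies `Y(0) = hI` and solves
the matrix ODE `Y′(t) = −Y(t) − R Y(t)⁻¹ R` on `[0, T̂)`. -/
theorem matrix_sqrt_solves_ode
    {n : ℕ} (hn : 1 ≤ n) (h : ℝ) (hh : 0 < h)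
    (R : Matrix (Fin n) (Fin n) ℝ) (hRsymm : Rᵀ = R) (hRinv : IsUnit R)
    (That : ℝ) (hThat : 0 < That)
    (Y : ℝ → Matrix (Fin n) (Fin n) ℝ)
    (hYdiff : ∀ t ∈ Set.Ico (0 : ℝ) That, DifferentiableAt ℝ Y t)
    (hYpos : ∀ t ∈ Set.Ico (0 : ℝ) That, (Y t).PosDef)
    (hYcomm : ∀ t ∈ Set.Ico (0 : ℝ) That, Y t * R = R * Y t)
    (hYsq : ∀ t ∈ Set.Ico (0 : ℝ) That,
      Y t ^ 2 = Real.exp (-2 * t) • (h ^ 2 • (1 : Matrix (Fin n) (Fin n) ℝ) + R ^ 2)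
        - R ^ 2) :
    Y 0 = h • (1 : Matrix (Fin n) (Fin n) ℝ) ∧
      ∀ t ∈ Set.Ico (0 : ℝ) That,
        deriv Y t = -Y t - R * (Y t)⁻¹ * R := by
  set C : Matrix (Fin n) (Fin n) ℝ := h ^ 2 • (1 : Matrix (Fin n) (Fin n) ℝ) + R ^ 2 with hC
  have h0mem : (0 : ℝ) ∈ Set.Ico (0 : ℝ) That := ⟨le_refl 0, hThat⟩
  constructor
  · -- initial condition
    have hsmulpsd : (h • (1 : Matrix (Fin n) (Fin n) ℝ)).PosSemidef := by
      rw [smul_one_eq_diagonal]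
      exact posSemidef_diagonal_iff.mpr fun i => hh.le
    have hY0sq : Y 0 ^ 2 = (h • (1 : Matrix (Fin n) (Fin n) ℝ)) ^ 2 := by
      have h0 := hYsq 0 h0mem
      rw [h0]
      rw [smul_pow, one_pow]
      norm_num [hC, Real.exp_zero]
    have hpd : (Y 0 + h • (1 : Matrix (Fin n) (Fin n) ℝ)).PosDef :=
      (hYpos 0 h0mem).add_posSemidef hsmulpsd
    have hprod : (Y 0 + h • (1 : Matrix (Fin n) (Fin n) ℝ)) * (Y 0 - h • 1) = 0 := by
      have e : (Y 0 + h • (1 : Matrix (Fin n) (Fin n) ℝ)) * (Y 0 - h • 1)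
          = Y 0 ^ 2 - (h • (1 : Matrix (Fin n) (Fin n) ℝ)) ^ 2 := by
        simp only [sq, add_mul, mul_sub, smul_mul_assoc, mul_smul_comm, one_mul, mul_one]
        module
      rw [e, hY0sq, sub_self]
    have hdet : IsUnit (Y 0 + h • (1 : Matrix (Fin n) (Fin n) ℝ)).det := hpd.det_pos.ne'.isUnit
    have hz : Y 0 - h • (1 : Matrix (Fin n) (Fin n) ℝ) = 0 := by
      calc Y 0 - h • (1 : Matrix (Fin n) (Fin n) ℝ)
          = ((Y 0 + h • 1)⁻¹ * (Y 0 + h • 1)) * (Y 0 - h • 1) := by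
            rw [nonsing_inv_mul _ hdet, one_mul]
        _ = 0 := by rw [mul_assoc, hprod, mul_zero]
    exact sub_eq_zero.mp hz
  · intro t ht
    set A : Matrix (Fin n) (Fin n) ℝ := Y t with hAdef
    have hApd : A.PosDef := hYpos t ht
    have hAunit : IsUnit A.det := hApd.det_pos.ne'.isUnit
    have hinv1 : A * A⁻¹ = 1 := mul_nonsing_inv A hAunit
    have hinv2 : A⁻¹ * A = 1 := nonsing_inv_mul A hAunit
    have hAR : A * R = R * A := hYcomm t ht
    have hAR2 : A * R ^ 2 = R ^ 2 * A := by
      rw [pow_two, ← mul_assoc, hAR, mul_assoc, hAR, ← mul_assoc]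
    have hARinv : A⁻¹ * R = R * A⁻¹ := by
      calc A⁻¹ * R = A⁻¹ * R * (A * A⁻¹) := by rw [hinv1, mul_one]
        _ = A⁻¹ * (R * A) * A⁻¹ := by noncomm_ring
        _ = A⁻¹ * (A * R) * A⁻¹ := by rw [hAR]
        _ = (A⁻¹ * A) * (R * A⁻¹) := by noncomm_ring
        _ = R * A⁻¹ := by rw [hinv2, one_mul]
    set D : Matrix (Fin n) (Fin n) ℝ := deriv Y t with hDdef
    have hYt : HasDerivAt Y D t := (hYdiff t ht).hasDerivAt
    have hbil : IsBoundedBilinearMap ℝ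
        (fun p : Matrix (Fin n) (Fin n) ℝ × Matrix (Fin n) (Fin n) ℝ => p.1 * p.2) := by
      let M := Matrix (Fin n) (Fin n) ℝ
      let b1 : M →ₗ[ℝ] M →L[ℝ] M :=
        { toFun := fun x => (LinearMap.mul ℝ M x).toContinuousLinearMap
          map_add' := by intro x y; ext z; simp [add_mul]
          map_smul' := by intro c x; ext z; simp [smul_mul_assoc] }
      exact (b1.toContinuousLinearMap).isBoundedBilinearMap
    have hsq : HasDerivAt (fun s => Y s * Y s) (A * D + D * A) t := by
      have hp : HasDerivAt (fun s => (Y s, Y s)) (D, D) t := hYt.prodMk hYt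
      have hcomp := (hbil.hasFDerivAt (A, A)).comp_hasDerivAt t hp
      simp only [IsBoundedBilinearMap.deriv_apply, Function.comp_def] at hcomp
      exact hcomp
    have hexp : HasDerivAt (fun s : ℝ => Real.exp (-2 * s)) (Real.exp (-2 * t) * (-2)) t := by
      have h1 : HasDerivAt (fun s : ℝ => -2 * s) (-2) t := by
        simpa using (hasDerivAt_id t).const_mul (-2 : ℝ)
      exact h1.exp
    have hg : HasDerivAt (fun s : ℝ => Real.exp (-2 * s) • C - R ^ 2)
        ((Real.exp (-2 * t) * (-2)) • C) t := (hexp.smul_const C).sub_const (R ^ 2)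
    have hcongr : HasDerivWithinAt (fun s => Y s * Y s)
        ((Real.exp (-2 * t) * (-2)) • C) (Set.Ico (0 : ℝ) That) t := by
      refine (hg.hasDerivWithinAt).congr (fun s hs => ?_) ?_
      · rw [← pow_two]; exact hYsq s hs
      · rw [← pow_two]; exact hYsq t ht
    have huniq : UniqueDiffWithinAt ℝ (Set.Ico (0 : ℝ) That) t := uniqueDiffOn_Ico 0 That t ht
    have hEq : A * D + D * A = (Real.exp (-2 * t) * (-2)) • C := by
      rw [← (hsq.hasDerivWithinAt.derivWithin huniq), hcongr.derivWithin huniq]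
    have hCe : Real.exp (-2 * t) • C = A ^ 2 + R ^ 2 := by
      rw [hYsq t ht, sub_add_cancel]
    have hEq2 : A * D + D * A = (-2 : ℝ) • (A ^ 2 + R ^ 2) := by
      rw [hEq, ← hCe, smul_smul]
      congr 1
      ring
    set X : Matrix (Fin n) (Fin n) ℝ := D + A + R ^ 2 * A⁻¹ with hXdef
    have e1 : A * (R ^ 2 * A⁻¹) = R ^ 2 := by
      rw [← mul_assoc, hAR2, mul_assoc, hinv1, mul_one]
    have e2 : (R ^ 2 * A⁻¹) * A = R ^ 2 := by rw [mul_assoc, hinv2, mul_one]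
    have hAX : A * X + X * A = 0 := by
      have expand : A * X + X * A
          = (A * D + D * A) + (A * A + A * A) + (A * (R ^ 2 * A⁻¹) + (R ^ 2 * A⁻¹) * A) := by
        rw [hXdef]; noncomm_ring
      rw [expand, e1, e2, hEq2, pow_two]
      module
    have hax' : X * A = -(A * X) := by
      have := hAX
      linear_combination (norm := module) this
    have hXA2 : X * A ^ 2 = A ^ 2 * X := by
      rw [pow_two]
      calc X * (A * A) = (X * A) * A := by rw [mul_assoc]
        _ = (-(A * X)) * A := by rw [hax']
        _ = -(A * (X * A)) := by noncomm_ring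
        _ = -(A * (-(A * X))) := by rw [hax']
        _ = (A * A) * X := by noncomm_ring
    have hXAcomm : X * A = A * X := commute_of_commute_sq hApd hXA2
    have hAX0 : A * X = 0 := by
      have h2 : (2 : ℝ) • (A * X) = 0 := by
        rw [two_smul]
        calc A * X + A * X = A * X + X * A := by rw [hXAcomm]
          _ = 0 := hAX
      exact (smul_eq_zero.mp h2).resolve_left (by norm_num)
    have hX0 : X = 0 := by
      calc X = (A⁻¹ * A) * X := by rw [hinv2, one_mul]
        _ = A⁻¹ * (A * X) := by rw [mul_assoc]
        _ = 0 := by rw [hAX0, mul_zero]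
    have hD : D = -A - R ^ 2 * A⁻¹ := by
      have h0 : D + A + R ^ 2 * A⁻¹ = 0 := by rw [← hXdef]; exact hX0
      calc D = (D + A + R ^ 2 * A⁻¹) - A - R ^ 2 * A⁻¹ := by abel
        _ = -A - R ^ 2 * A⁻¹ := by rw [h0]; abel
    have hfin : R * A⁻¹ * R = R ^ 2 * A⁻¹ := by
      rw [mul_assoc, hARinv, ← mul_assoc, ← pow_two]
    rw [hD, hfin]
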